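/- Let Q_A be the Gabriel quiver of a finite-dimensional k-algebra A. If Q_A contains an oriented cycle of length at least 2 (not a loop), then A ⊗_k A is τ-tilting infinite. -/

import Mathlib

open Quiver
set_option linter.unusedSectionVars false

/-- The path algebra of a quiver `V` over a field `k`: the free `k`-module on
the set of all paths in `V`, with multiplication induced by concatenation of
paths (composable paths concatenate, non-composable products vanish). -/
abbrev PathAlgebra (k V : Type) [Field k] [Quiver.{0} V] : Type :=
  (Σ a b : V, Quiver.Path a b) →₀ k

namespace PathAlgebra

variable {k V : Type} [Field k] [Quiver.{0} V] [Fintype V] [DecidableEq V]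

/-- Transport of a path along an equality of its source. -/
def castPath {a b c : V} (h : a = b) (p : Quiver.Path b c) : Quiver.Path a c := by
  subst h; exact p

@[simp] lemma castPath_rfl {a c : V} (p : Quiver.Path a c) : castPath rfl p = p := rfl

/-- Product of two basis paths: their concatenation if they are composable,
and `0` otherwise. -/
noncomputable def mulIdx (p q : Σ a b : V, Quiver.Path a b) : PathAlgebra k V :=
  if h : p.2.1 = q.1 then
    Finsupp.single ⟨p.1, q.2.1, p.2.2.comp (castPath h q.2.2)⟩ 1
  else 0

/-- Multiplication on the path algebra, as a bilinear map. -/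
noncomputable def mulL :
    PathAlgebra k V →ₗ[k] PathAlgebra k V →ₗ[k] PathAlgebra k V :=
  Finsupp.lsum k fun p =>
    LinearMap.toSpanSingleton k _
      (Finsupp.lsum k fun q => LinearMap.toSpanSingleton k _ (mulIdx p q))

noncomputable instance : Mul (PathAlgebra k V) := ⟨fun x y => mulL x y⟩

lemma mul_def (x y : PathAlgebra k V) : x * y = mulL x y := rfl

lemma single_mul_single (p q : Σ a b : V, Quiver.Path a b) (a b : k) :
    (Finsupp.single p a * Finsupp.single q b : PathAlgebra k V)
      = (a * b) • mulIdx p q := by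
  rw [mul_def, mulL]
  simp [Finsupp.lsum_single, LinearMap.toSpanSingleton_apply, smul_smul]

noncomputable instance : One (PathAlgebra k V) :=
  ⟨∑ a : V, Finsupp.single ⟨a, a, Quiver.Path.nil⟩ 1⟩

lemma one_def : (1 : PathAlgebra k V)
    = ∑ a : V, Finsupp.single ⟨a, a, Quiver.Path.nil⟩ 1 := rfl

private lemma zero_mul' (x : PathAlgebra k V) : 0 * x = 0 := by
  rw [mul_def, map_zero]; rfl

private lemma mul_zero' (x : PathAlgebra k V) : x * 0 = 0 := by
  rw [mul_def, map_zero]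

private lemma add_mul' (x y z : PathAlgebra k V) : (x + y) * z = x * z + y * z := by
  rw [mul_def, mul_def, mul_def, map_add]; rfl

private lemma mul_add' (x y z : PathAlgebra k V) : x * (y + z) = x * y + x * z := by
  rw [mul_def, mul_def, mul_def, map_add]

private lemma smul_mul' (c : k) (x y : PathAlgebra k V) : (c • x) * y = c • (x * y) := by
  rw [mul_def, mul_def, map_smul]; rfl

private lemma mul_smul' (c : k) (x y : PathAlgebra k V) : x * (c • y) = c • (x * y) := by
  rw [mul_def, mul_def, map_smul]

private lemma mul_assoc' (x y z : PathAlgebra k V) : x * y * z = x * (y * z) := by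
  induction x using Finsupp.induction_linear with
  | zero => rw [zero_mul', zero_mul', zero_mul']
  | add f g hf hg => rw [add_mul', add_mul', add_mul', hf, hg]
  | single p xp =>
    induction y using Finsupp.induction_linear with
    | zero => rw [zero_mul', mul_zero', zero_mul']
    | add f g hf hg => rw [mul_add', add_mul', add_mul', mul_add', hf, hg]
    | single q xq =>
      induction z using Finsupp.induction_linear with
      | zero => rw [mul_zero', mul_zero', mul_zero']
      | add f g hf hg => rw [mul_add', mul_add', mul_add', hf, hg]
      | single r xr =>
        obtain ⟨a1, a2, f⟩ := p
        obtain ⟨a3, a4, g⟩ := q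
        obtain ⟨a5, a6, h⟩ := r
        rw [single_mul_single, single_mul_single, smul_mul', mul_smul']
        by_cases h12 : a2 = a3
        · subst h12
          by_cases h45 : a4 = a5
          · subst h45
            simp [mulIdx, single_mul_single, smul_smul, Quiver.Path.comp_assoc,
              mul_assoc, mul_comm, mul_left_comm]
          · simp [mulIdx, h45, single_mul_single, smul_smul, mul_zero', zero_mul']
        · by_cases h45 : a4 = a5
          · subst h45
            simp [mulIdx, h12, single_mul_single, smul_smul, mul_zero', zero_mul']
          · simp [mulIdx, h12, h45, single_mul_single, smul_smul, mul_zero', zero_mul']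

private lemma one_mul' (x : PathAlgebra k V) : 1 * x = x := by
  induction x using Finsupp.induction_linear with
  | zero => rw [mul_zero']
  | add f g hf hg => rw [mul_add', hf, hg]
  | single p xp =>
    obtain ⟨a, b, f⟩ := p
    rw [one_def, mul_def, map_sum, LinearMap.sum_apply]
    have : ∀ c : V,
        (mulL (Finsupp.single ⟨c, c, Quiver.Path.nil⟩ (1 : k)))
          (Finsupp.single ⟨a, b, f⟩ xp)
        = if c = a then Finsupp.single ⟨a, b, f⟩ xp else 0 := by
      intro c
      rw [← mul_def, single_mul_single, one_mul, mulIdx]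
      by_cases hca : c = a
      · subst hca
        simp [Quiver.Path.nil_comp, Finsupp.smul_single]
      · simp [hca]
    rw [Finset.sum_congr rfl fun c _ => this c]
    simp

private lemma mul_one' (x : PathAlgebra k V) : x * 1 = x := by
  induction x using Finsupp.induction_linear with
  | zero => rw [zero_mul']
  | add f g hf hg => rw [add_mul', hf, hg]
  | single p xp =>
    obtain ⟨a, b, f⟩ := p
    rw [one_def, mul_def, map_sum]
    have : ∀ c : V,
        (mulL (Finsupp.single ⟨a, b, f⟩ xp))
          (Finsupp.single ⟨c, c, Quiver.Path.nil⟩ (1 : k))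
        = if c = b then Finsupp.single ⟨a, b, f⟩ xp else 0 := by
      intro c
      rw [← mul_def, single_mul_single, mul_one, mulIdx]
      by_cases hcb : b = c
      · subst hcb
        simp [Finsupp.smul_single]
      · simp [hcb, Ne.symm hcb]
    rw [Finset.sum_congr rfl fun c _ => this c]
    simp

noncomputable instance instRing : Ring (PathAlgebra k V) :=
  { (inferInstanceAs (AddCommGroup (PathAlgebra k V)) : AddCommGroup (PathAlgebra k V)) with
    mul := (· * ·)
    one := 1
    mul_assoc := mul_assoc'
    one_mul := one_mul'
    mul_one := mul_one'
    left_distrib := mul_add'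
    right_distrib := add_mul'
    zero_mul := zero_mul'
    mul_zero := mul_zero' }

noncomputable instance instAlgebra : Algebra k (PathAlgebra k V) :=
  Algebra.ofModule smul_mul' mul_smul'

end PathAlgebra
/-- A brick: a (finite-dimensional) module all of whose nonzero endomorphisms
are invertible. -/
def IsBrick (A : Type) [Ring A] (M : ModuleCat.{0} A) : Prop :=
  Module.Finite A M ∧ Nontrivial M ∧ ∀ f : M →ₗ[A] M, f ≠ 0 → Function.Bijective f

/-- τ-tilting finiteness, via the Demonet–Iyama–Jasso characterization:
there are only finitely many isomorphism classes of bricks. -/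
def IsTauTiltingFinite (A : Type) [Ring A] : Prop :=
  ∃ (n : ℕ) (M : Fin n → ModuleCat.{0} A),
    ∀ N : ModuleCat.{0} A, IsBrick A N → ∃ i, Nonempty (N ≃ₗ[A] M i)

/-- `φ` presents `A` as a bound quiver algebra `kQ/I` with `I = ker φ` an
admissible ideal: `φ` is surjective, `ker φ ⊆ R_Q²` (every element of the
kernel is supported on paths of length at least `2`), and `R_Q^m ⊆ ker φ` for
some `m` (every path of length at least `m` lies in the kernel). -/
def IsAdmissiblePresentation {k V A : Type} [Field k] [Quiver.{0} V]
    [Fintype V] [DecidableEq V] [Ring A] [Algebra k A]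
    (φ : PathAlgebra k V →ₐ[k] A) : Prop :=
  Function.Surjective φ ∧
  (∀ x : PathAlgebra k V, φ x = 0 → ∀ p ∈ Finsupp.support x, 2 ≤ p.2.2.length) ∧
  ∃ m : ℕ, ∀ p : Σ a b : V, Quiver.Path a b, m ≤ p.2.2.length →
    φ (Finsupp.single p 1) = 0

open Quiver

namespace Extraction
variable {V : Type} [Quiver.{0} V]

/-- the list of non-initial vertices of a path (length = path length). -/
def pverts : ∀ {a b : V}, Path a b → List V
  | _, _, .nil => []
  | _, _, .cons (c := c) p _ => pverts p ++ [c]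

@[simp] lemma pverts_nil (a : V) : pverts (Path.nil : Path a a) = [] := by rw [pverts]

@[simp] lemma pverts_cons {a b c : V} (p : Path a b) (e : b ⟶ c) :
    pverts (p.cons e) = pverts p ++ [c] := by rw [pverts]

@[simp] lemma length_pverts : ∀ {a b : V} (p : Path a b), (pverts p).length = p.length
  | _, _, .nil => by simp
  | _, _, .cons p e => by simp [Path.length_cons, length_pverts p]

lemma pverts_comp {a b c : V} (p : Path a b) : ∀ (q : Path b c),
    pverts (p.comp q) = pverts p ++ pverts q
  | .nil => by simp
  | .cons q e => by simp [pverts_comp p q]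

lemma mem_pverts_split {a b : V} {c : V} :
    ∀ (p : Path a b), c ∈ pverts p →
      ∃ (p₁ : Path a c) (p₂ : Path c b), p₁.comp p₂ = p ∧ 1 ≤ p₁.length
  | .nil, h => by simp [pverts] at h
  | .cons (c := d) p e, h => by
    rw [pverts_cons, List.mem_append, List.mem_singleton] at h
    rcases h with h | rfl
    · obtain ⟨p₁, p₂, rfl, h1⟩ := mem_pverts_split p h
      exact ⟨p₁, p₂.cons e, rfl, h1⟩
    · exact ⟨p.cons e, Path.nil, rfl, by simp⟩

lemma not_nodup_split {a b : V} :
    ∀ (p : Path a b), ¬ (pverts p).Nodup →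
      ∃ (c : V) (p₁ : Path a c) (p₂ : Path c c) (p₃ : Path c b),
        p₁.comp (p₂.comp p₃) = p ∧ 1 ≤ p₂.length
  | .nil, h => by simp [pverts] at h
  | .cons (c := d) p e, h => by
    rw [pverts_cons] at h
    by_cases hd : (pverts p).Nodup
    · have hdm : d ∈ pverts p := by
        by_contra hnot
        exact h (List.nodup_append.mpr ⟨hd, List.nodup_singleton d, fun x hx y hy hxy => hnot (by rw [List.mem_singleton] at hy; rw [← hy, ← hxy]; exact hx)⟩)
      obtain ⟨p₁, p₂, rfl, h1⟩ := mem_pverts_split p hdm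
      exact ⟨d, p₁, p₂.cons e, Path.nil, by simp, by simp⟩
    · obtain ⟨c, p₁, p₂, p₃, rfl, h1⟩ := not_nodup_split p hd
      exact ⟨c, p₁, p₂, p₃.cons e, by simp, h1⟩

end Extraction

namespace Extraction
variable {V : Type} [Quiver.{0} V]

/-- vertex at position `n` along a path (0 = start). -/
def vAt {a b : V} (p : Path a b) (n : ℕ) : V := (a :: pverts p).getD n b

@[simp] lemma vAt_zero {a b : V} (p : Path a b) : vAt p 0 = a := rfl

lemma vAt_last : ∀ {a b : V} (p : Path a b), vAt p p.length = b
  | _, _, .nil => rfl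
  | a, _, .cons (c := c) p e => by
    have h1 : (a :: pverts p).length = p.length + 1 := by simp
    simp [vAt, Path.length_cons, List.getD_eq_getElem?_getD, List.getElem?_append_right,
      h1]

lemma vAt_cons_lt {a b c : V} (p : Path a b) (e : b ⟶ c) {n : ℕ} (hn : n ≤ p.length) :
    vAt (p.cons e) n = vAt p n := by
  unfold vAt
  rcases Nat.lt_or_ge n (p.length + 1) with h | h
  · have h1 : n < (a :: pverts p).length := by simpa using h
    rw [pverts_cons, List.getD_eq_getElem?_getD, List.getD_eq_getElem?_getD]
    rw [show (a :: (pverts p ++ [c])) = (a :: pverts p) ++ [c] by simp]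
    rw [List.getElem?_append_left h1, List.getElem?_eq_getElem h1]
    simp
  · omega

lemma arrow_vAt : ∀ {a b : V} (p : Path a b) (n : ℕ), n + 1 ≤ p.length →
      Nonempty (vAt p n ⟶ vAt p (n + 1))
  | _, _, .nil, n, h => by simp at h
  | _, _, .cons (c := c) p e, n, h => by
    rcases Nat.lt_or_ge (n+1) (p.length + 1) with h' | h'
    · have h2 : n + 1 ≤ p.length := by omega
      rw [vAt_cons_lt p e (by omega), vAt_cons_lt p e h2]
      exact arrow_vAt p n h2
    · have hn : n = p.length := by simp [Path.length_cons] at h; omega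
      subst hn
      rw [vAt_cons_lt p e le_rfl, vAt_last, show p.length + 1 = (p.cons e).length by simp,
        vAt_last]
      exact ⟨e⟩

end Extraction

namespace Extraction
variable {V : Type} [Quiver.{0} V]

theorem exists_cycle_of_closed {a : V} (r : Path a a) {N : ℕ} (hN : r.length = N)
    (h2 : 2 ≤ N) (hnd : ((a :: pverts r).dropLast).Nodup) :
    ∃ w : ZMod N → V, Function.Injective w ∧ ∀ i : ZMod N, Nonempty (w i ⟶ w (i + 1)) := by
  haveI : NeZero N := ⟨by omega⟩
  set L : List V := a :: pverts r with hL
  have hLlen : L.length = N + 1 := by simp [hL, hN]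
  have hdl : L.dropLast.length = N := by simp [hLlen]
  have hvAt : ∀ n : ℕ, (hn : n < N) → vAt r n = L.dropLast[n]'(by omega) := by
    intro n hn
    rw [List.getElem_dropLast]
    rw [show vAt r n = L.getD n a from rfl, List.getD_eq_getElem?_getD,
      List.getElem?_eq_getElem (by omega : n < L.length)]
    simp
  refine ⟨fun i => vAt r i.val, ?_, ?_⟩
  · intro i j hij
    dsimp only at hij
    have hi : i.val < N := ZMod.val_lt i
    have hj : j.val < N := ZMod.val_lt j
    rw [hvAt _ hi, hvAt _ hj] at hij
    have := (List.Nodup.getElem_inj_iff hnd).mp hij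
    have : i.val = j.val := this
    exact ZMod.val_injective _ this
  · intro i
    have hi : i.val < N := ZMod.val_lt i
    rcases Nat.lt_or_ge (i.val + 1) N with h | h
    · have hip : (i + 1).val = i.val + 1 := by
        have : ((i.val + 1 : ℕ) : ZMod N) = i + 1 := by
          push_cast [ZMod.natCast_val, ZMod.cast_id]; ring
        rw [← this, ZMod.val_cast_of_lt h]
      show Nonempty (vAt r i.val ⟶ vAt r (i+1).val)
      rw [hip]
      exact arrow_vAt r i.val (by omega)
    · have hiv : i.val = N - 1 := by omega
      have hip : (i + 1) = 0 := by
        have : ((i.val + 1 : ℕ) : ZMod N) = i + 1 := by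
          push_cast [ZMod.natCast_val, ZMod.cast_id]; ring
        rw [← this, hiv]
        rw [show N - 1 + 1 = N by omega]
        exact ZMod.natCast_self N
      rw [hip]
      show Nonempty (vAt r i.val ⟶ vAt r (0 : ZMod N).val)
      have h3 : vAt r N = a := by rw [← hN, vAt_last]
      have := arrow_vAt r (N - 1) (by omega)
      rw [show N - 1 + 1 = N by omega, h3] at this
      rw [hiv, ZMod.val_zero, vAt_zero]
      exact this

end Extraction

namespace Extraction
variable {V : Type} [Quiver.{0} V]

lemma pverts_dropLast_concat {b c : V} (q : Path b c) (h : 1 ≤ q.length) :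
    (pverts q).dropLast ++ [c] = pverts q := by
  cases q with
  | nil => simp at h
  | cons q e => rw [pverts_cons, List.dropLast_concat]

lemma one_le_length_of_ne {a b : V} (hab : a ≠ b) (p : Path a b) : 1 ≤ p.length := by
  rcases Nat.eq_zero_or_pos p.length with h | h
  · exact absurd (p.eq_of_length_zero h) hab
  · exact h

theorem exists_simple_cycle_aux : ∀ (n : ℕ), ∀ {a b : V}, a ≠ b →
    ∀ (p : Path a b) (q : Path b a), p.length + q.length ≤ n →
    ∃ N : ℕ, 2 ≤ N ∧ ∃ w : ZMod N → V, Function.Injective w ∧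
      ∀ i : ZMod N, Nonempty (w i ⟶ w (i + 1)) := by
  intro n
  induction n using Nat.strong_induction_on with
  | _ n IH =>
  intro a b hab p q hlen
  classical
  have hp1 : 1 ≤ p.length := one_le_length_of_ne hab p
  have hq1 : 1 ≤ q.length := one_le_length_of_ne (Ne.symm hab) q
  by_cases h1 : a ∈ pverts p
  · obtain ⟨p₁, p₂, rfl, hl1⟩ := mem_pverts_split p h1
    have hlt : p₂.length + q.length < n := by
      have := Path.length_comp p₁ p₂
      omega
    exact IH (p₂.length + q.length) (by omega) hab p₂ q le_rfl
  by_cases h2 : b ∈ pverts q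
  · obtain ⟨q₁, q₂, rfl, hl1⟩ := mem_pverts_split q h2
    have := Path.length_comp q₁ q₂
    exact IH (p.length + q₂.length) (by omega) hab p q₂ (by omega)
  by_cases h3 : ¬ (pverts p).Nodup
  · obtain ⟨c, p₁, p₂, p₃, rfl, hl1⟩ := not_nodup_split p h3
    have e1 := Path.length_comp p₁ (p₂.comp p₃)
    have e2 := Path.length_comp p₂ p₃
    have e3 := Path.length_comp p₁ p₃
    exact IH ((p₁.comp p₃).length + q.length) (by omega) hab (p₁.comp p₃) q le_rfl
  by_cases h4 : ¬ (pverts q).Nodup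
  · obtain ⟨c, q₁, q₂, q₃, rfl, hl1⟩ := not_nodup_split q h4
    have e1 := Path.length_comp q₁ (q₂.comp q₃)
    have e2 := Path.length_comp q₂ q₃
    have e3 := Path.length_comp q₁ q₃
    exact IH (p.length + (q₁.comp q₃).length) (by omega) hab p (q₁.comp q₃) le_rfl
  push_neg at h3 h4
  by_cases h5 : ∃ c, c ∈ pverts p ∧ c ∈ pverts q
  · obtain ⟨c, hcp, hcq⟩ := h5
    have hcb : c ≠ b := fun h => h2 (h ▸ hcq)
    obtain ⟨p₁, p₂, rfl, hl1⟩ := mem_pverts_split p hcp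
    obtain ⟨q₁, q₂, rfl, hl2⟩ := mem_pverts_split q hcq
    have e1 := Path.length_comp p₁ p₂
    have e2 := Path.length_comp q₁ q₂
    exact IH (q₁.length + p₂.length) (by omega) (Ne.symm hcb) q₁ p₂ le_rfl
  · -- final case: assemble the simple cycle
    push_neg at h5
    set r : Path a a := p.comp q with hr
    have hNlen : r.length = p.length + q.length := Path.length_comp p q
    refine ⟨r.length, by omega, ?_⟩
    obtain ⟨Yd, hq_eq⟩ : ∃ Yd, Yd ++ [a] = pverts q :=
      ⟨(pverts q).dropLast, pverts_dropLast_concat q hq1⟩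
    have hdrop : (a :: pverts r).dropLast = a :: (pverts p ++ Yd) := by
      have h' : (a :: pverts r) = (a :: (pverts p ++ Yd)) ++ [a] := by
        rw [hr, pverts_comp, ← hq_eq]; simp
      rw [h', List.dropLast_concat]
    have hYd : a ∉ Yd ∧ Yd.Nodup := by
      have h' := h4
      rw [← hq_eq, List.nodup_append] at h'
      exact ⟨fun h => h'.2.2 a h a (List.mem_singleton_self a) rfl, h'.1⟩
    have hYdsub : ∀ x ∈ Yd, x ∈ pverts q := by
      intro x hx; rw [← hq_eq]; exact List.mem_append_left _ hx
    have hnd : ((a :: pverts r).dropLast).Nodup := by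
      rw [hdrop, List.nodup_cons, List.nodup_append]
      refine ⟨?_, h3, hYd.2, ?_⟩
      · rw [List.mem_append]
        rintro (h | h)
        · exact h1 h
        · exact hYd.1 h
      · intro x hx y hy hxy
        rw [← hxy] at hy
        exact h5 x hx (hYdsub x hy)
    exact exists_cycle_of_closed r rfl (by omega) hnd

theorem exists_simple_cycle {a b : V} (hab : a ≠ b) (p : Path a b) (q : Path b a) :
    ∃ N : ℕ, 2 ≤ N ∧ ∃ w : ZMod N → V, Function.Injective w ∧
      ∀ i : ZMod N, Nonempty (w i ⟶ w (i + 1)) :=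
  exists_simple_cycle_aux (p.length + q.length) hab p q le_rfl

end Extraction

namespace PathRep
open Quiver PathAlgebra

variable {k V : Type} [Field k] [Quiver.{0} V] [Fintype V] [DecidableEq V]
variable {E : Type} [Ring E] [Algebra k E]

/-- Data of a representation of the quiver, suitable for building an algebra
map out of the path algebra. -/
structure RepData (k V E : Type) [Field k] [Quiver.{0} V] [Fintype V]
    [DecidableEq V] [Ring E] [Algebra k E] where
  proj : V → E
  act : ∀ ⦃c c' : V⦄, (c ⟶ c') → E
  proj_mul : ∀ c d, proj c * proj d = if c = d then proj c else 0
  sum_proj : ∑ c, proj c = 1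
  proj_act : ∀ ⦃c c' : V⦄ (e : c ⟶ c'), proj c * act e = act e
  act_proj : ∀ ⦃c c' : V⦄ (e : c ⟶ c'), act e * proj c' = act e

namespace RepData

variable (D : RepData k V E)

/-- image of a single path. -/
def pathMap : ∀ {a b : V}, Path a b → E
  | a, _, .nil => D.proj a
  | _, _, .cons p e => pathMap p * D.act e

@[simp] lemma pathMap_nil (a : V) : D.pathMap (Path.nil : Path a a) = D.proj a := by
  rw [pathMap]

@[simp] lemma pathMap_cons {a b c : V} (p : Path a b) (e : b ⟶ c) :
    D.pathMap (p.cons e) = D.pathMap p * D.act e := by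
  rw [pathMap]

lemma pathMap_mul_proj : ∀ {a b : V} (p : Path a b), D.pathMap p * D.proj b = D.pathMap p
  | _, _, .nil => by rw [pathMap_nil, D.proj_mul]; simp
  | _, _, .cons p e => by rw [pathMap_cons, mul_assoc, D.act_proj]

lemma proj_mul_pathMap {a b c : V} (p : Path a b) :
    D.proj c * D.pathMap p = if c = a then D.pathMap p else 0 := by
  induction p with
  | nil =>
    rw [pathMap_nil, D.proj_mul]
    by_cases h : c = a <;> simp [h]
  | cons p e ih =>
    rw [pathMap_cons, ← mul_assoc, ih]
    split <;> simp

lemma pathMap_comp {a b c : V} (p : Path a b) (q : Path b c) :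
    D.pathMap (p.comp q) = D.pathMap p * D.pathMap q := by
  induction q with
  | nil => rw [Path.comp_nil, pathMap_nil, pathMap_mul_proj]
  | cons q e ih => rw [Path.comp_cons, pathMap_cons, pathMap_cons, ih, mul_assoc]

lemma pathMap_mul_pathMap_ne {a b a' b' : V} (p : Path a b) (q : Path a' b')
    (h : b ≠ a') : D.pathMap p * D.pathMap q = 0 := by
  rw [← D.pathMap_mul_proj p, mul_assoc, D.proj_mul_pathMap, if_neg h, mul_zero]

/-- underlying linear map of the induced algebra morphism. -/
noncomputable def linMap : PathAlgebra k V →ₗ[k] E :=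
  Finsupp.lsum k fun P => LinearMap.toSpanSingleton k E (D.pathMap P.2.2)

@[simp] lemma linMap_single (P : Σ a b : V, Path a b) (c : k) :
    D.linMap (Finsupp.single P c) = c • D.pathMap P.2.2 := by
  rw [linMap]
  simp [LinearMap.toSpanSingleton_apply]

/-- The algebra morphism out of the path algebra induced by a representation. -/
noncomputable def toAlgHom : PathAlgebra k V →ₐ[k] E := by
  refine AlgHom.ofLinearMap D.linMap ?_ ?_
  · rw [PathAlgebra.one_def, map_sum]
    rw [← D.sum_proj]
    refine Finset.sum_congr rfl fun c _ => ?_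
    simp
  · intro x y
    induction x using Finsupp.induction_linear with
    | zero => rw [zero_mul', map_zero, zero_mul]
    | add f g hf hg => rw [add_mul', map_add, map_add, hf, hg, add_mul]
    | single P cP =>
      induction y using Finsupp.induction_linear with
      | zero => rw [mul_zero', map_zero, mul_zero]
      | add f g hf hg => rw [mul_add', map_add, map_add, hf, hg, mul_add]
      | single Q cQ =>
        rw [single_mul_single, map_smul, linMap_single, linMap_single, mulIdx]
        obtain ⟨a1, a2, pp⟩ := P
        obtain ⟨a3, a4, qq⟩ := Q
        by_cases h : a2 = a3
        · subst h
          simp only [dif_pos rfl, castPath_rfl, dite_true, dif_pos trivial]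
          rw [linMap_single, D.pathMap_comp]
          rw [smul_mul_assoc, mul_smul_comm, smul_smul, mul_one, mul_smul]
        · simp only [dif_neg h, map_zero, smul_zero]
          rw [smul_mul_assoc, mul_smul_comm, D.pathMap_mul_pathMap_ne _ _ h]
          simp

@[simp] lemma toAlgHom_single (P : Σ a b : V, Path a b) (c : k) :
    D.toAlgHom (Finsupp.single P c) = c • D.pathMap P.2.2 := D.linMap_single P c

end RepData
end PathRep

namespace CycleMod
open Quiver PathAlgebra PathRep

variable {k V : Type} [Field k] [Quiver.{0} V] [Fintype V] [DecidableEq V]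
variable {N : ℕ} [NeZero N]

/-- The pair of vertices attached to a basis index. -/
def pvert (w : ZMod N → V) : Bool × ZMod N → V × V
  | (false, j) => (w (j + 1), w (-j))
  | (true, j) => (w j, w (-j))

/-- carrier of the modules. -/
abbrev Mcar (k : Type) (N : ℕ) : Type := Bool × ZMod N → k

noncomputable def proj1 (w : ZMod N → V) (c : V) : Module.End k (Mcar k N) where
  toFun m := fun x => if (pvert w x).1 = c then m x else 0
  map_add' m m' := by funext x; by_cases h : (pvert w x).1 = c <;> simp [h]
  map_smul' r m := by funext x; by_cases h : (pvert w x).1 = c <;> simp [h]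

noncomputable def proj2 (w : ZMod N → V) (c : V) : Module.End k (Mcar k N) where
  toFun m := fun x => if (pvert w x).2 = c then m x else 0
  map_add' m m' := by funext x; by_cases h : (pvert w x).2 = c <;> simp [h]
  map_smul' r m := by funext x; by_cases h : (pvert w x).2 = c <;> simp [h]

open Classical in
noncomputable def act1 (w : ZMod N → V) (γ : ∀ i : ZMod N, w i ⟶ w (i + 1))
    {c c' : V} (δ : c ⟶ c') : Module.End k (Mcar k N) where
  toFun m := fun x => match x with
    | (true, j) => if (⟨c, c', δ⟩ : Σ u v : V, u ⟶ v) = ⟨w j, w (j + 1), γ j⟩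
        then m (false, j) else 0
    | (false, _) => 0
  map_add' m m' := by
    funext x
    obtain ⟨b, j⟩ := x
    cases b <;> simp only [Pi.add_apply]
    · simp
    · split <;> simp
  map_smul' r m := by
    funext x
    obtain ⟨b, j⟩ := x
    cases b <;> simp only [Pi.smul_apply, RingHom.id_apply]
    · simp
    · split <;> simp

open Classical in
noncomputable def act2 (w : ZMod N → V) (γ : ∀ i : ZMod N, w i ⟶ w (i + 1))
    (μ : ZMod N → k) {c c' : V} (δ : c ⟶ c') : Module.End k (Mcar k N) where
  toFun m := fun x => match x with
    | (true, j) => if (⟨c, c', δ⟩ : Σ u v : V, u ⟶ v) = ⟨w (-j), w (-j + 1), γ (-j)⟩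
        then μ (j - 1) * m (false, j - 1) else 0
    | (false, _) => 0
  map_add' m m' := by
    funext x
    obtain ⟨b, j⟩ := x
    cases b <;> simp only [Pi.add_apply]
    · simp
    · split <;> ring_nf
  map_smul' r m := by
    funext x
    obtain ⟨b, j⟩ := x
    cases b <;> simp only [Pi.smul_apply, RingHom.id_apply, smul_eq_mul]
    · simp
    · split <;> ring

end CycleMod

namespace CycleMod
open Quiver PathAlgebra PathRep

variable {k V : Type} [Field k] [Quiver.{0} V] [Fintype V] [DecidableEq V]
variable {N : ℕ} [NeZero N]

lemma end_ext {f g : Module.End k (Mcar k N)} (h : ∀ m x, f m x = g m x) : f = g := by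
  refine LinearMap.ext fun m => funext fun x => h m x

@[simp] lemma proj1_apply (w : ZMod N → V) (c : V) (m : Mcar k N) (x : Bool × ZMod N) :
    proj1 w c m x = if (pvert w x).1 = c then m x else 0 := rfl

@[simp] lemma proj2_apply (w : ZMod N → V) (c : V) (m : Mcar k N) (x : Bool × ZMod N) :
    proj2 w c m x = if (pvert w x).2 = c then m x else 0 := rfl

open Classical in
lemma act1_apply_true (w : ZMod N → V) (γ : ∀ i : ZMod N, w i ⟶ w (i + 1))
    {c c' : V} (δ : c ⟶ c') (m : Mcar k N) (j : ZMod N) :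
    act1 w γ δ m (true, j)
      = if (⟨c, c', δ⟩ : Σ u v : V, u ⟶ v) = ⟨w j, w (j + 1), γ j⟩
          then m (false, j) else 0 := rfl

@[simp] lemma act1_apply_false (w : ZMod N → V) (γ : ∀ i : ZMod N, w i ⟶ w (i + 1))
    {c c' : V} (δ : c ⟶ c') (m : Mcar k N) (j : ZMod N) :
    act1 w γ δ m (false, j) = 0 := rfl

open Classical in
lemma act2_apply_true (w : ZMod N → V) (γ : ∀ i : ZMod N, w i ⟶ w (i + 1))
    (μ : ZMod N → k) {c c' : V} (δ : c ⟶ c') (m : Mcar k N) (j : ZMod N) :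
    act2 w γ μ δ m (true, j)
      = if (⟨c, c', δ⟩ : Σ u v : V, u ⟶ v) = ⟨w (-j), w (-j + 1), γ (-j)⟩
          then μ (j - 1) * m (false, j - 1) else 0 := rfl

@[simp] lemma act2_apply_false (w : ZMod N → V) (γ : ∀ i : ZMod N, w i ⟶ w (i + 1))
    (μ : ZMod N → k) {c c' : V} (δ : c ⟶ c') (m : Mcar k N) (j : ZMod N) :
    act2 w γ μ δ m (false, j) = 0 := rfl

open Classical in
noncomputable def D1 (w : ZMod N → V) (γ : ∀ i : ZMod N, w i ⟶ w (i + 1)) :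
    RepData k V (Module.End k (Mcar k N)) where
  proj := proj1 w
  act := fun _ _ δ => act1 w γ δ
  proj_mul c d := by
    apply end_ext; intro m x
    rw [Module.End.mul_apply]
    by_cases h : (pvert w x).1 = c <;> by_cases h' : (pvert w x).1 = d <;>
      by_cases hcd : c = d <;> simp_all
  sum_proj := by
    apply end_ext; intro m x
    rw [LinearMap.sum_apply]
    rw [Finset.sum_apply]
    simp
  proj_act := by
    intro c c' δ
    apply end_ext; intro m x
    obtain ⟨b, j⟩ := x
    rw [Module.End.mul_apply]
    cases b
    · simp
    · simp only [proj1_apply, act1_apply_true]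
      by_cases h : (⟨c, c', δ⟩ : Σ u v : V, u ⟶ v) = ⟨w j, w (j + 1), γ j⟩
      · have hc : c = w j := congrArg Sigma.fst h
        simp [h, pvert, hc]
      · simp [h]
  act_proj := by
    intro c c' δ
    apply end_ext; intro m x
    obtain ⟨b, j⟩ := x
    rw [Module.End.mul_apply]
    cases b
    · simp
    · simp only [act1_apply_true, proj1_apply]
      by_cases h : (⟨c, c', δ⟩ : Σ u v : V, u ⟶ v) = ⟨w j, w (j + 1), γ j⟩
      · have hc : c' = w (j + 1) := by
          have := congrArg (fun s => s.2.1) h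
          exact this
        simp [h, pvert, hc]
      · simp [h]

open Classical in
noncomputable def D2 (w : ZMod N → V) (γ : ∀ i : ZMod N, w i ⟶ w (i + 1))
    (μ : ZMod N → k) : RepData k V (Module.End k (Mcar k N)) where
  proj := proj2 w
  act := fun _ _ δ => act2 w γ μ δ
  proj_mul c d := by
    apply end_ext; intro m x
    rw [Module.End.mul_apply]
    by_cases h : (pvert w x).2 = c <;> by_cases h' : (pvert w x).2 = d <;>
      by_cases hcd : c = d <;> simp_all
  sum_proj := by
    apply end_ext; intro m x
    rw [LinearMap.sum_apply]
    rw [Finset.sum_apply]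
    simp
  proj_act := by
    intro c c' δ
    apply end_ext; intro m x
    obtain ⟨b, j⟩ := x
    rw [Module.End.mul_apply]
    cases b
    · simp
    · simp only [proj2_apply, act2_apply_true]
      by_cases h : (⟨c, c', δ⟩ : Σ u v : V, u ⟶ v) = ⟨w (-j), w (-j + 1), γ (-j)⟩
      · have hc : c = w (-j) := congrArg Sigma.fst h
        simp [h, pvert, hc]
      · simp [h]
  act_proj := by
    intro c c' δ
    apply end_ext; intro m x
    obtain ⟨b, j⟩ := x
    rw [Module.End.mul_apply]
    cases b
    · simp
    · simp only [act2_apply_true, proj2_apply]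
      by_cases h : (⟨c, c', δ⟩ : Σ u v : V, u ⟶ v) = ⟨w (-j), w (-j + 1), γ (-j)⟩
      · have hc : c' = w (-j + 1) := by
          have := congrArg (fun s => s.2.1) h
          exact this
        have : (pvert w ((false : Bool), j - 1)).2 = w (-j + 1) := by
          show w (-(j-1)) = w (-j + 1)
          ring_nf
        simp [h, this, hc]
      · simp [h]

end CycleMod

namespace CycleMod
open Quiver PathAlgebra PathRep

variable {k V : Type} [Field k] [Quiver.{0} V] [Fintype V] [DecidableEq V]
variable {N : ℕ} [NeZero N]
variable (w : ZMod N → V) (γ : ∀ i : ZMod N, w i ⟶ w (i + 1)) (μ : ZMod N → k)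

lemma act1_mul_act1 {c c' d d' : V} (δ : c ⟶ c') (δ' : d ⟶ d') :
    (act1 w γ δ * act1 w γ δ' : Module.End k (Mcar k N)) = 0 := by
  apply end_ext; intro m x
  obtain ⟨b, j⟩ := x
  rw [Module.End.mul_apply]
  cases b
  · simp
  · rw [act1_apply_true]
    split <;> simp

lemma act2_mul_act2 {c c' d d' : V} (δ : c ⟶ c') (δ' : d ⟶ d') :
    (act2 w γ μ δ * act2 w γ μ δ' : Module.End k (Mcar k N)) = 0 := by
  apply end_ext; intro m x
  obtain ⟨b, j⟩ := x
  rw [Module.End.mul_apply]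
  cases b
  · simp
  · rw [act2_apply_true]
    split <;> simp

/-- a path of length at least two maps to zero if products of two arrow
actions vanish. -/
lemma RepDataPathMapZero {E : Type} [Ring E] [Algebra k E] (D : RepData k V E)
    (hD : ∀ {c c' d d' : V} (δ : c ⟶ c') (δ' : d ⟶ d'), D.act δ * D.act δ' = 0) :
    ∀ {a b : V} (p : Path a b), 2 ≤ p.length → D.pathMap p = 0 := by
  intro a b p hp
  match p with
  | .nil => simp at hp
  | .cons .nil e => simp [Path.length_cons] at hp
  | .cons (.cons p e) e' =>
    rw [RepData.pathMap_cons, RepData.pathMap_cons, mul_assoc, hD e e', mul_zero]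

lemma commute_gen1 (c : V) (d : V) :
    Commute (proj1 w c : Module.End k (Mcar k N)) (proj2 w d) := by
  apply end_ext; intro m x
  rw [Module.End.mul_apply, Module.End.mul_apply]
  simp only [proj1_apply, proj2_apply]
  split <;> split <;> simp

lemma commute_gen2 (c : V) {d d' : V} (δ : d ⟶ d') :
    Commute (proj1 w c : Module.End k (Mcar k N)) (act2 w γ μ δ) := by
  apply end_ext; intro m x
  obtain ⟨b, j⟩ := x
  rw [Module.End.mul_apply, Module.End.mul_apply]
  cases b
  · simp
  · have h1 : (pvert w ((true : Bool), j)).1 = w j := rfl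
    have h2 : (pvert w ((false : Bool), j - 1)).1 = w j := by
      show w (j - 1 + 1) = w j
      ring_nf
    simp only [proj1_apply, act2_apply_true, h1, h2]
    by_cases hσ : (⟨d, d', δ⟩ : Σ u v : V, u ⟶ v) = ⟨w (-j), w (-j + 1), γ (-j)⟩ <;>
      by_cases hc : w j = c <;> simp [hσ, hc]

lemma commute_gen3 {c c' : V} (δ : c ⟶ c') (d : V) :
    Commute (act1 w γ δ : Module.End k (Mcar k N)) (proj2 w d) := by
  apply end_ext; intro m x
  obtain ⟨b, j⟩ := x
  rw [Module.End.mul_apply, Module.End.mul_apply]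
  cases b
  · simp
  · have h1 : (pvert w ((true : Bool), j)).2 = w (-j) := rfl
    have h2 : (pvert w ((false : Bool), j)).2 = w (-j) := rfl
    simp only [proj2_apply, act1_apply_true, h1, h2]
    by_cases hσ : (⟨c, c', δ⟩ : Σ u v : V, u ⟶ v) = ⟨w j, w (j + 1), γ j⟩ <;>
      by_cases hd : w (-j) = d <;> simp [hσ, hd]

lemma commute_gen4 {c c' d d' : V} (δ : c ⟶ c') (δ' : d ⟶ d') :
    Commute (act1 w γ δ : Module.End k (Mcar k N)) (act2 w γ μ δ') := by
  apply end_ext; intro m x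
  obtain ⟨b, j⟩ := x
  rw [Module.End.mul_apply, Module.End.mul_apply]
  cases b
  · simp
  · rw [act1_apply_true, act2_apply_true]
    split <;> split <;> simp

/-- all path images in the two representations commute. -/
lemma commute_paths {a b a' b' : V} (p : Path a b) (q : Path a' b') :
    Commute ((D1 w γ).pathMap p : Module.End k (Mcar k N)) ((D2 w γ μ).pathMap q) := by
  have key : ∀ (z : Module.End k (Mcar k N)),
      (∀ d, Commute z (proj2 w d)) → (∀ {d d' : V} (δ' : d ⟶ d'), Commute z (act2 w γ μ δ')) →
      Commute z ((D2 w γ μ).pathMap q) := by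
    intro z hz1 hz2
    induction q with
    | nil =>
      rw [RepData.pathMap_nil]
      exact hz1 _
    | cons q e ih =>
      rw [RepData.pathMap_cons]
      exact Commute.mul_right ih (hz2 e)
  induction p with
  | nil =>
    rw [RepData.pathMap_nil]
    exact key _ (fun d => commute_gen1 w _ d) (fun {d d'} δ' => commute_gen2 w γ μ _ δ')
  | cons p e ih =>
    rw [RepData.pathMap_cons]
    refine Commute.mul_left ih ?_
    exact key _ (fun d => commute_gen3 w γ e d) (fun {d d'} δ' => commute_gen4 w γ μ e δ')

end CycleMod

section LiftAlg
open Quiver PathAlgebra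

variable {k V A E : Type} [Field k] [Quiver.{0} V] [Fintype V] [DecidableEq V]
  [Ring A] [Algebra k A] [Ring E] [Algebra k E]

lemma lift_congr (φ : PathAlgebra k V →ₐ[k] A) (R : PathAlgebra k V →ₐ[k] E)
    (hkill : ∀ x, φ x = 0 → R x = 0) {x y : PathAlgebra k V} (h : φ x = φ y) :
    R x = R y := by
  have h0 : φ (x - y) = 0 := by rw [map_sub, h, sub_self]
  have := hkill _ h0
  rw [map_sub, sub_eq_zero] at this
  exact this

/-- lift of a representation of the path algebra along an admissible
presentation. -/
noncomputable def liftAlg (φ : PathAlgebra k V →ₐ[k] A) (R : PathAlgebra k V →ₐ[k] E)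
    (hsurj : Function.Surjective φ) (hkill : ∀ x, φ x = 0 → R x = 0) : A →ₐ[k] E where
  toFun a := R (Function.surjInv hsurj a)
  map_one' := by
    have : φ (Function.surjInv hsurj (1 : A)) = φ 1 := by
      rw [Function.surjInv_eq hsurj, map_one]
    show R _ = 1
    rw [lift_congr φ R hkill this, map_one]
  map_mul' a b := by
    show R _ = R _ * R _
    rw [← map_mul]
    refine lift_congr φ R hkill ?_
    rw [Function.surjInv_eq hsurj, map_mul, Function.surjInv_eq hsurj,
      Function.surjInv_eq hsurj]
  map_zero' := by
    have : φ (Function.surjInv hsurj (0 : A)) = φ 0 := by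
      rw [Function.surjInv_eq hsurj, map_zero]
    show R _ = 0
    rw [lift_congr φ R hkill this, map_zero]
  map_add' a b := by
    show R _ = R _ + R _
    rw [← map_add]
    refine lift_congr φ R hkill ?_
    rw [Function.surjInv_eq hsurj, map_add, Function.surjInv_eq hsurj,
      Function.surjInv_eq hsurj]
  commutes' c := by
    have : φ (Function.surjInv hsurj (algebraMap k A c)) = φ (algebraMap k _ c) := by
      rw [Function.surjInv_eq hsurj, AlgHom.commutes]
    show R _ = _
    rw [lift_congr φ R hkill this, AlgHom.commutes]

lemma liftAlg_apply_φ (φ : PathAlgebra k V →ₐ[k] A) (R : PathAlgebra k V →ₐ[k] E)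
    (hsurj : Function.Surjective φ) (hkill : ∀ x, φ x = 0 → R x = 0)
    (x : PathAlgebra k V) : liftAlg φ R hsurj hkill (φ x) = R x :=
  lift_congr φ R hkill (Function.surjInv_eq hsurj _)

end LiftAlg

namespace CycleMod
open Quiver PathAlgebra PathRep

variable {k V A : Type} [Field k] [Quiver.{0} V] [Fintype V] [DecidableEq V]
  [Ring A] [Algebra k A] {N : ℕ} [NeZero N]

lemma toAlgHom_kill (w : ZMod N → V) (γ : ∀ i : ZMod N, w i ⟶ w (i + 1))
    {E : Type} [Ring E] [Algebra k E] (D : RepData k V E)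
    (hD : ∀ {c c' d d' : V} (δ : c ⟶ c') (δ' : d ⟶ d'), D.act δ * D.act δ' = 0)
    (φ : PathAlgebra k V →ₐ[k] A)
    (hker : ∀ x : PathAlgebra k V, φ x = 0 → ∀ P ∈ x.support, 2 ≤ P.2.2.length) :
    ∀ x, φ x = 0 → D.toAlgHom x = 0 := by
  intro x hx
  conv_lhs => rw [← Finsupp.sum_single x]
  rw [map_finsuppSum]
  refine Finset.sum_eq_zero fun P hP => ?_
  dsimp only
  rw [RepData.toAlgHom_single, RepDataPathMapZero D hD _ (hker x hx P hP), smul_zero]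

lemma commute_toAlgHom (w : ZMod N → V) (γ : ∀ i : ZMod N, w i ⟶ w (i + 1))
    (μ : ZMod N → k) (x y : PathAlgebra k V) :
    Commute (((D1 (k := k) w γ).toAlgHom x : Module.End k (Mcar k N))) ((D2 w γ μ).toAlgHom y) := by
  induction x using Finsupp.induction_linear with
  | zero => rw [map_zero]; exact Commute.zero_left _
  | add f g hf hg => rw [map_add]; exact Commute.add_left hf hg
  | single P c =>
    induction y using Finsupp.induction_linear with
    | zero => rw [map_zero]; exact Commute.zero_right _
    | add f g hf hg => rw [map_add]; exact Commute.add_right hf hg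
    | single Q d =>
      rw [RepData.toAlgHom_single, RepData.toAlgHom_single]
      have h := commute_paths w γ μ P.2.2 Q.2.2
      show _ * _ = _ * _
      rw [smul_mul_assoc, mul_smul_comm, smul_mul_assoc, mul_smul_comm, h.eq, smul_comm]

/-- The algebra morphism `A ⊗ A → End (Mcar k N)` attached to the cycle data
and the scalars `μ`. -/
noncomputable def Psi (w : ZMod N → V) (γ : ∀ i : ZMod N, w i ⟶ w (i + 1))
    (μ : ZMod N → k) (φ : PathAlgebra k V →ₐ[k] A) (hsurj : Function.Surjective φ)
    (hker : ∀ x : PathAlgebra k V, φ x = 0 → ∀ P ∈ x.support, 2 ≤ P.2.2.length) :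
    TensorProduct k A A →ₐ[k] Module.End k (Mcar k N) :=
  Algebra.TensorProduct.lift
    (liftAlg φ (D1 (k := k) w γ).toAlgHom hsurj
      (toAlgHom_kill w γ _ (fun δ δ' => act1_mul_act1 w γ δ δ') φ hker))
    (liftAlg φ (D2 w γ μ).toAlgHom hsurj
      (toAlgHom_kill w γ _ (fun δ δ' => act2_mul_act2 w γ μ δ δ') φ hker))
    (fun a b => (commute_toAlgHom w γ μ _ _ :))

lemma Psi_tmul (w : ZMod N → V) (γ : ∀ i : ZMod N, w i ⟶ w (i + 1))
    (μ : ZMod N → k) (φ : PathAlgebra k V →ₐ[k] A) (hsurj : Function.Surjective φ)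
    (hker : ∀ x : PathAlgebra k V, φ x = 0 → ∀ P ∈ x.support, 2 ≤ P.2.2.length)
    (x y : PathAlgebra k V) :
    Psi w γ μ φ hsurj hker (φ x ⊗ₜ[k] φ y)
      = (D1 (k := k) w γ).toAlgHom x * (D2 w γ μ).toAlgHom y := by
  rw [Psi]
  erw [Algebra.TensorProduct.lift_tmul]
  rw [liftAlg_apply_φ, liftAlg_apply_φ]

/-- the idempotent attached to a pair of vertices, inside `A ⊗ A`. -/
noncomputable def Pel (φ : PathAlgebra k V →ₐ[k] A) (c d : V) : TensorProduct k A A :=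
  φ (Finsupp.single ⟨c, c, Path.nil⟩ 1) ⊗ₜ[k] φ (Finsupp.single ⟨d, d, Path.nil⟩ 1)

/-- first-factor arrow element of `A ⊗ A`. -/
noncomputable def Ael1 (φ : PathAlgebra k V →ₐ[k] A) (w : ZMod N → V)
    (γ : ∀ i : ZMod N, w i ⟶ w (i + 1)) (i : ZMod N) : TensorProduct k A A :=
  φ (Finsupp.single ⟨w i, w (i + 1), Path.nil.cons (γ i)⟩ 1) ⊗ₜ[k] φ 1

/-- second-factor arrow element of `A ⊗ A`. -/
noncomputable def Ael2 (φ : PathAlgebra k V →ₐ[k] A) (w : ZMod N → V)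
    (γ : ∀ i : ZMod N, w i ⟶ w (i + 1)) (i : ZMod N) : TensorProduct k A A :=
  φ 1 ⊗ₜ[k] φ (Finsupp.single ⟨w i, w (i + 1), Path.nil.cons (γ i)⟩ 1)

lemma Psi_Pel (w : ZMod N → V) (γ : ∀ i : ZMod N, w i ⟶ w (i + 1))
    (μ : ZMod N → k) (φ : PathAlgebra k V →ₐ[k] A) (hsurj : Function.Surjective φ)
    (hker : ∀ x : PathAlgebra k V, φ x = 0 → ∀ P ∈ x.support, 2 ≤ P.2.2.length)
    (c d : V) :
    Psi w γ μ φ hsurj hker (Pel φ c d) = proj1 w c * proj2 w d := by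
  rw [Pel, Psi_tmul, RepData.toAlgHom_single, RepData.toAlgHom_single]
  rw [show ((⟨c, c, Path.nil⟩ : Σ a b : V, Path a b).2.2) = (Path.nil : Path c c) from rfl]
  rw [show ((⟨d, d, Path.nil⟩ : Σ a b : V, Path a b).2.2) = (Path.nil : Path d d) from rfl]
  rw [RepData.pathMap_nil, RepData.pathMap_nil, one_smul, one_smul]
  rfl

lemma Psi_Ael1 (w : ZMod N → V) (γ : ∀ i : ZMod N, w i ⟶ w (i + 1))
    (μ : ZMod N → k) (φ : PathAlgebra k V →ₐ[k] A) (hsurj : Function.Surjective φ)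
    (hker : ∀ x : PathAlgebra k V, φ x = 0 → ∀ P ∈ x.support, 2 ≤ P.2.2.length)
    (i : ZMod N) :
    Psi w γ μ φ hsurj hker (Ael1 φ w γ i) = act1 w γ (γ i) := by
  rw [Ael1, Psi_tmul, map_one, RepData.toAlgHom_single, one_smul, mul_one]
  show (D1 (k := k) w γ).pathMap (Path.nil.cons (γ i)) = _
  rw [RepData.pathMap_cons, RepData.pathMap_nil]
  exact (D1 (k := k) w γ).proj_act (γ i)

lemma Psi_Ael2 (w : ZMod N → V) (γ : ∀ i : ZMod N, w i ⟶ w (i + 1))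
    (μ : ZMod N → k) (φ : PathAlgebra k V →ₐ[k] A) (hsurj : Function.Surjective φ)
    (hker : ∀ x : PathAlgebra k V, φ x = 0 → ∀ P ∈ x.support, 2 ≤ P.2.2.length)
    (i : ZMod N) :
    Psi w γ μ φ hsurj hker (Ael2 φ w γ i) = act2 w γ μ (γ i) := by
  rw [Ael2, Psi_tmul, map_one, RepData.toAlgHom_single, one_smul, one_mul]
  show (D2 w γ μ).pathMap (Path.nil.cons (γ i)) = _
  rw [RepData.pathMap_cons, RepData.pathMap_nil]
  exact (D2 w γ μ).proj_act (γ i)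

lemma Psi_algebraMap (w : ZMod N → V) (γ : ∀ i : ZMod N, w i ⟶ w (i + 1))
    (μ : ZMod N → k) (φ : PathAlgebra k V →ₐ[k] A) (hsurj : Function.Surjective φ)
    (hker : ∀ x : PathAlgebra k V, φ x = 0 → ∀ P ∈ x.support, 2 ≤ P.2.2.length)
    (c : k) (m : Mcar k N) :
    Psi w γ μ φ hsurj hker (algebraMap k (TensorProduct k A A) c) m = c • m := by
  rw [AlgHom.commutes, Module.algebraMap_end_apply]

end CycleMod

namespace CycleMod
open Quiver PathAlgebra PathRep

variable {k V : Type} [Field k] [Quiver.{0} V] [Fintype V] [DecidableEq V]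
  {N : ℕ} [NeZero N]

/-- standard basis vector. -/
def bas (k : Type) [Field k] (N : ℕ) (x : Bool × ZMod N) : Mcar k N :=
  fun y => if x = y then 1 else 0

@[simp] lemma bas_apply_self (x : Bool × ZMod N) : bas k N x x = 1 := by
  simp [bas]

lemma bas_apply_ne {x y : Bool × ZMod N} (h : x ≠ y) : bas k N x y = 0 := by
  simp [bas, h]

lemma pvert_inj (w : ZMod N → V) (hw : Function.Injective w)
    (hone : (1 : ZMod N) ≠ 0) : Function.Injective (pvert w) := by
  rintro ⟨b, j⟩ ⟨b', j'⟩ h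
  cases b <;> cases b' <;> simp only [pvert, Prod.mk.injEq] at h <;>
      obtain ⟨h1, h2⟩ := h <;> have hj : j = j' := neg_injective (hw h2) <;> subst hj
  · rfl
  · have : j + 1 = j := hw h1
    exact absurd (by linear_combination this : (1 : ZMod N) = 0) hone
  · have : j = j + 1 := hw h1
    exact absurd (by linear_combination -this : (1 : ZMod N) = 0) hone
  · rfl

lemma projPair_apply (w : ZMod N → V) (hw : Function.Injective w)
    (hone : (1 : ZMod N) ≠ 0) (x : Bool × ZMod N) (m : Mcar k N) :
    (proj1 (k := k) w (pvert w x).1 * proj2 (k := k) w (pvert w x).2) m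
      = fun y => if y = x then m y else 0 := by
  funext y
  rw [Module.End.mul_apply, proj1_apply]
  by_cases h : y = x
  · subst h
    simp
  · have hv : pvert w y ≠ pvert w x :=
      fun hc => h (pvert_inj w hw hone hc)
    by_cases h1 : (pvert w y).1 = (pvert w x).1
    · have h2 : (pvert w y).2 ≠ (pvert w x).2 := by
        intro h2
        exact hv (Prod.ext h1 h2)
      rw [if_pos h1, proj2_apply, if_neg h2, if_neg h]
    · rw [if_neg h1, if_neg h]

open Classical in
lemma act1_bas (w : ZMod N → V) (hw : Function.Injective w)
    (γ : ∀ i : ZMod N, w i ⟶ w (i + 1)) (i j : ZMod N) :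
    act1 (k := k) w γ (γ i) (bas k N (false, j))
      = if i = j then bas k N (true, i) else 0 := by
  funext y
  obtain ⟨b, j'⟩ := y
  cases b
  · rw [act1_apply_false]
    split <;> [skip; rfl]
    exact (bas_apply_ne (by simp) ).symm
  · rw [act1_apply_true]
    have hσ : ((⟨w i, w (i + 1), γ i⟩ : Σ u v : V, u ⟶ v) = ⟨w j', w (j' + 1), γ j'⟩)
        ↔ i = j' := by
      constructor
      · intro h
        exact hw (congrArg Sigma.fst h)
      · rintro rfl; rfl
    by_cases hij' : i = j'
    · subst hij'
      rw [if_pos (hσ.mpr rfl)]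
      by_cases hij : i = j
      · subst hij
        simp [bas]
      · rw [bas_apply_ne (by simp [Ne.symm hij]), if_neg hij]
        rfl
    · rw [if_neg (fun h => hij' (hσ.mp h))]
      split <;> [skip; rfl]
      exact (bas_apply_ne (by simp [hij'])).symm

open Classical in
lemma act2_bas (w : ZMod N → V) (hw : Function.Injective w)
    (γ : ∀ i : ZMod N, w i ⟶ w (i + 1)) (μ : ZMod N → k) (j m : ZMod N) :
    act2 (k := k) w γ μ (γ (-j - 1)) (bas k N (false, m))
      = if m = j then μ j • bas k N (true, j + 1) else 0 := by
  funext y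
  obtain ⟨b, j'⟩ := y
  cases b
  · rw [act2_apply_false]
    split
    · rw [Pi.smul_apply, bas_apply_ne (by simp), smul_zero]
    · rfl
  · rw [act2_apply_true]
    have hσ : ((⟨w (-j - 1), w (-j - 1 + 1), γ (-j - 1)⟩ : Σ u v : V, u ⟶ v)
        = ⟨w (-j'), w (-j' + 1), γ (-j')⟩) ↔ j' = j + 1 := by
      constructor
      · intro h
        have := hw (congrArg Sigma.fst h)
        linear_combination this
      · rintro rfl
        rw [show -(j + 1) = -j - 1 by ring]
    by_cases hj' : j' = j + 1
    · subst hj'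
      rw [if_pos (hσ.mpr rfl), show j + 1 - 1 = j by ring]
      by_cases hm : m = j
      · subst hm
        rw [if_pos rfl, bas_apply_self, mul_one, Pi.smul_apply, bas_apply_self,
          smul_eq_mul, mul_one]
      · rw [bas_apply_ne (by simp [hm]), mul_zero, if_neg hm]
        rfl
    · rw [if_neg (fun h => hj' (hσ.mp h))]
      split
      · rw [Pi.smul_apply, bas_apply_ne (by simp [Ne.symm hj']), smul_zero]
      · rfl

end CycleMod

namespace CycleMod
open Quiver PathAlgebra PathRep

variable {k V A : Type} [Field k] [Quiver.{0} V] [Fintype V] [DecidableEq V]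
  [Ring A] [Algebra k A] {N : ℕ} [NeZero N]

/-- The central computation: any additive map intertwining the two module
structures is diagonal with controlled coefficients. -/
lemma central (w : ZMod N → V) (hw : Function.Injective w)
    (hone : (1 : ZMod N) ≠ 0) (γ : ∀ i : ZMod N, w i ⟶ w (i + 1))
    (μ μ' : ZMod N → k) (φ : PathAlgebra k V →ₐ[k] A)
    (hsurj : Function.Surjective φ)
    (hker : ∀ x : PathAlgebra k V, φ x = 0 → ∀ P ∈ x.support, 2 ≤ P.2.2.length)
    (f : Mcar k N → Mcar k N)
    (hf : ∀ (bb : TensorProduct k A A) (m : Mcar k N),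
      f (Psi w γ μ φ hsurj hker bb m) = Psi w γ μ' φ hsurj hker bb (f m)) :
    ∃ d : Bool × ZMod N → k,
      (∀ x, f (bas k N x) = d x • bas k N x) ∧
      (∀ i : ZMod N, d (true, i) = d (false, i)) ∧
      (∀ j : ZMod N, μ j * d (true, j + 1) = μ' j * d (false, j)) := by
  classical
  -- diagonality
  have hdiag : ∀ x, f (bas k N x) = (f (bas k N x) x) • bas k N x := by
    intro x
    have h1 := hf (Pel φ (pvert w x).1 (pvert w x).2) (bas k N x)
    rw [Psi_Pel, Psi_Pel, projPair_apply w hw hone, projPair_apply w hw hone] at h1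
    have h2 : (fun y => if y = x then bas k N x y else 0) = bas k N x := by
      funext y
      by_cases h : y = x
      · simp [h]
      · rw [if_neg h, bas_apply_ne (Ne.symm h)]
    rw [h2] at h1
    rw [h1]
    funext y
    by_cases h : y = x
    · subst h
      simp [bas]
    · rw [if_neg h, Pi.smul_apply, bas_apply_ne (Ne.symm h), smul_zero]
  refine ⟨fun x => f (bas k N x) x, fun x => hdiag x, ?_, ?_⟩
  · -- act1 constraint
    intro i
    have h1 := hf (Ael1 φ w γ i) (bas k N (false, i))
    rw [Psi_Ael1, Psi_Ael1, act1_bas w hw γ i i, if_pos rfl, hdiag (true, i), hdiag (false, i), map_smul,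
      act1_bas w hw γ i i, if_pos rfl] at h1
    have := congrFun h1 (true, i)
    simpa using this
  · -- act2 constraint
    intro j
    have h1 := hf (Ael2 φ w γ (-j - 1)) (bas k N (false, j))
    rw [Psi_Ael2, Psi_Ael2, act2_bas w hw γ μ j j, if_pos rfl] at h1
    have h2 : f (μ j • bas k N (true, j + 1)) = μ j • f (bas k N (true, j + 1)) := by
      have h3 := hf (algebraMap k (TensorProduct k A A) (μ j)) (bas k N (true, j + 1))
      rw [Psi_algebraMap, Psi_algebraMap] at h3
      exact h3
    rw [h2, hdiag (true, j + 1), hdiag (false, j), map_smul, act2_bas w hw γ μ' j j, if_pos rfl] at h1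
    have := congrFun h1 (true, j + 1)
    simp only [Pi.smul_apply, bas_apply_self, smul_eq_mul, mul_one] at this
    linear_combination this

end CycleMod

namespace CycleMod
open Quiver PathAlgebra PathRep

variable {k V : Type} [Field k] {N : ℕ} [NeZero N]

lemma basis_repr (m : Mcar k N) : m = ∑ x : Bool × ZMod N, m x • bas k N x := by
  funext y
  rw [Finset.sum_apply]
  simp only [Pi.smul_apply, bas, smul_eq_mul, mul_ite, mul_one, mul_zero]
  rw [Finset.sum_ite_eq' Finset.univ y m]
  simp

lemma chain_const {d : Bool × ZMod N → k}
    (h1 : ∀ i : ZMod N, d (true, i) = d (false, i))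
    (h2 : ∀ j : ZMod N, j ≠ 0 → d (true, j + 1) = d (false, j)) :
    ∀ x : Bool × ZMod N, d x = d (true, 1) := by
  have key : ∀ n : ℕ, d (true, 1 + (n : ZMod N)) = d (true, 1) := by
    intro n
    induction n with
    | zero => simp
    | succ n ih =>
      by_cases h : (1 + (n : ZMod N)) = 0
      · rw [show ((n + 1 : ℕ) : ZMod N) = (n : ZMod N) + 1 by push_cast; ring,
          show (1 : ZMod N) + ((n : ZMod N) + 1) = (1 + (n : ZMod N)) + 1 by ring, h]
        simp
      · rw [show ((n + 1 : ℕ) : ZMod N) = (n : ZMod N) + 1 by push_cast; ring,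
          show (1 : ZMod N) + ((n : ZMod N) + 1) = (1 + (n : ZMod N)) + 1 by ring,
          h2 _ h, ← h1, ih]
  have keyT : ∀ j : ZMod N, d (true, j) = d (true, 1) := by
    intro j
    have : (1 : ZMod N) + ((j - 1).val : ZMod N) = j := by
      rw [ZMod.natCast_rightInverse (j - 1)]
      ring
    rw [← this]
    exact key (j - 1).val
  rintro ⟨b, j⟩
  cases b
  · rw [← h1 j]
    exact keyT j
  · exact keyT j

end CycleMod

section Master
open Quiver PathAlgebra PathRep CycleMod

theorem master_tau_infinite {k V A : Type} [Field k] [IsAlgClosed k] [Quiver.{0} V]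
    [Fintype V] [DecidableEq V] [Ring A] [Algebra k A]
    (φ : PathAlgebra k V →ₐ[k] A) (hsurj : Function.Surjective φ)
    (hker : ∀ x : PathAlgebra k V, φ x = 0 → ∀ P ∈ x.support, 2 ≤ P.2.2.length)
    {a b : V} (hab : a ≠ b) (p : Path a b) (q : Path b a) :
    ¬ IsTauTiltingFinite (TensorProduct k A A) := by
  classical
  obtain ⟨N, hN2, w, hw, harr⟩ := Extraction.exists_simple_cycle hab p q
  haveI : NeZero N := ⟨by omega⟩
  haveI : Fact (1 < N) := ⟨by omega⟩
  have hone : (1 : ZMod N) ≠ 0 := by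
    intro h
    have h2 := congrArg ZMod.val h
    rw [ZMod.val_one, ZMod.val_zero] at h2
    exact one_ne_zero h2
  set B := TensorProduct k A A with hB
  let γ : ∀ i : ZMod N, w i ⟶ w (i + 1) := fun i => (harr i).some
  let μ : k → ZMod N → k := fun t j => if j = 0 then t else 1
  -- the family of module structures
  let Ψ : k → (B →ₐ[k] Module.End k (Mcar k N)) := fun t => Psi w γ (μ t) φ hsurj hker
  let mod : ∀ t : k, Module B (Mcar k N) := fun t => Module.compHom _ (Ψ t).toRingHom
  have hsmul : ∀ (t : k) (bb : B) (m : Mcar k N),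
      (letI := mod t; bb • m) = Ψ t bb m := fun t bb m => rfl
  have hksmul : ∀ (t : k) (c : k) (m : Mcar k N),
      (letI := mod t; (algebraMap k B c) • m) = c • m := by
    intro t c m
    rw [hsmul]
    exact Psi_algebraMap w γ (μ t) φ hsurj hker c m
  let Nt : k → ModuleCat.{0} B := fun t => @ModuleCat.of B _ (Mcar k N) _ (mod t)
  letI : ∀ t : k, Module B (Nt t) := mod
  -- finiteness
  have hfin : ∀ t : k, Module.Finite B (Nt t) := by
    intro t
    letI := mod t
    refine ⟨⟨Finset.univ.image (bas k N), ?_⟩⟩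
    rw [Finset.coe_image, Finset.coe_univ, Set.image_univ]
    rw [eq_top_iff]
    intro m _
    rw [show m = ∑ x : Bool × ZMod N, m x • bas k N x from basis_repr m]
    refine Submodule.sum_mem _ fun x _ => ?_
    rw [show (m x • bas k N x : Mcar k N) = (algebraMap k B (m x)) • bas k N x from
      (hksmul t (m x) (bas k N x)).symm]
    exact Submodule.smul_mem _ _ (Submodule.subset_span ⟨x, rfl⟩)
  -- nontriviality
  have hnontriv : Nontrivial (Mcar k N) := by
    refine ⟨0, bas k N (true, 1), fun h => ?_⟩
    have := congrFun h (true, 1)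
    rw [bas_apply_self] at this
    exact one_ne_zero this.symm
  -- intertwiners are scalars
  have hscalar : ∀ (t s : k) (f : Mcar k N → Mcar k N),
      (∀ (bb : B) (m : Mcar k N), f (Ψ t bb m) = Ψ s bb (f m)) →
      (∀ m m' : Mcar k N, f (m + m') = f m + f m') →
      ∃ β : k, (∀ m, f m = β • m) ∧ t * β = s * β := by
    intro t s f hf hadd
    obtain ⟨d, hd1, hd2, hd3⟩ := central w hw hone γ (μ t) (μ s) φ hsurj hker f hf
    have hchain : ∀ x, d x = d (true, 1) := by
      refine chain_const hd2 fun j hj => ?_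
      have h := hd3 j
      rw [show μ t j = 1 by simp [μ, hj], show μ s j = 1 by simp [μ, hj],
        one_mul, one_mul] at h
      exact h
    have hβrel : t * d (true, 1) = s * d (true, 1) := by
      have := hd3 0
      rw [show μ t 0 = t by simp [μ], show μ s 0 = s by simp [μ], zero_add, hchain (true, 1),
        hchain (false, 0)] at this
      exact this
    refine ⟨d (true, 1), ?_, hβrel⟩
    intro m
    have hfk : ∀ (c : k) (v : Mcar k N), f (c • v) = c • f v := by
      intro c v
      have h3 := hf (algebraMap k B c) v
      rw [Psi_algebraMap, Psi_algebraMap] at h3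
      exact h3
    rw [show m = ∑ x : Bool × ZMod N, m x • bas k N x from basis_repr m]
    have hsum : f (∑ x : Bool × ZMod N, m x • bas k N x)
        = ∑ x : Bool × ZMod N, f (m x • bas k N x) :=
      map_sum (AddMonoidHom.mk' f hadd) _ Finset.univ
    rw [hsum, Finset.smul_sum]
    refine Finset.sum_congr rfl fun x _ => ?_
    rw [hfk, hd1, hchain, smul_comm]
  -- each Nt is a brick
  have hbrick : ∀ t : k, IsBrick B (Nt t) := by
    intro t
    refine ⟨hfin t, hnontriv, ?_⟩
    intro f hf0
    have hf : ∀ (bb : B) (m : Mcar k N), (f : Mcar k N → Mcar k N) (Ψ t bb m)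
        = Ψ t bb (f m) := fun bb m => f.map_smul bb m
    obtain ⟨β, hβ, -⟩ := hscalar t t f hf (fun m m' => f.map_add m m')
    have hβ0 : β ≠ 0 := by
      intro h
      apply hf0
      apply LinearMap.ext
      intro m
      show (f : Mcar k N → Mcar k N) m = 0
      rw [hβ, h, zero_smul]
    have hLR : ∃ finv : Mcar k N → Mcar k N,
        Function.LeftInverse finv (f : Mcar k N → Mcar k N) ∧
        Function.RightInverse finv (f : Mcar k N → Mcar k N) := by
      refine ⟨fun m => β⁻¹ • m, ?_, ?_⟩
      · intro m
        rw [hβ m]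
        show β⁻¹ • (β • m) = m
        rw [smul_smul, inv_mul_cancel₀ hβ0, one_smul]
      · intro m
        show (f : Mcar k N → Mcar k N) (β⁻¹ • m) = m
        rw [hβ (β⁻¹ • m), smul_smul, mul_inv_cancel₀ hβ0, one_smul]
    obtain ⟨finv, hL, hR⟩ := hLR
    exact Function.bijective_iff_has_inverse.mpr ⟨finv, hL, hR⟩
  -- conclude by pigeonhole
  intro hTTF
  obtain ⟨n, Mlist, hM⟩ := hTTF
  let F : k → Fin n := fun t => (hM (Nt t) (hbrick t)).choose
  have hFE : ∀ t : k, Nonempty ((Nt t) ≃ₗ[B] Mlist (F t)) :=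
    fun t => (hM (Nt t) (hbrick t)).choose_spec
  obtain ⟨t, s, hts, hF⟩ := Finite.exists_ne_map_eq_of_infinite F
  have key : ∀ i : Fin n, Nonempty ((Nt t) ≃ₗ[B] Mlist i) → Nonempty ((Nt s) ≃ₗ[B] Mlist i) →
      Nonempty ((Nt t) ≃ₗ[B] (Nt s)) := fun i ⟨e1⟩ ⟨e2⟩ => ⟨e1.trans e2.symm⟩
  obtain ⟨g⟩ := key (F s) (hF ▸ hFE t) (hFE s)
  have hg : ∀ (bb : B) (m : Mcar k N), (g : Mcar k N → Mcar k N) (Ψ t bb m)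
      = Ψ s bb (g m) := fun bb m => g.map_smul bb m
  obtain ⟨β, hβ, hrel⟩ := hscalar t s g hg (fun m m' => g.map_add m m')
  have hβ0 : β ≠ 0 := by
    intro h
    have h1 : (g : Mcar k N → Mcar k N) (bas k N (true, 1)) = 0 := by
      rw [hβ, h, zero_smul]
    have h2 : (g : Mcar k N → Mcar k N) 0 = 0 := by
      rw [hβ, smul_zero]
    have := g.injective (h1.trans h2.symm)
    have h3 := congrFun this (true, 1)
    rw [bas_apply_self] at h3
    exact one_ne_zero h3
  exact hts (mul_right_cancel₀ hβ0 hrel)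

end Master

/-- If the Gabriel quiver of `A` (the quiver of any admissible presentation
of `A`) contains an oriented cycle through at least two distinct vertices
(i.e. an oriented cycle which is not a loop), then `A ⊗ₖ A` is τ-tilting
infinite. -/

theorem stmt16 (k A : Type) [Field k] [IsAlgClosed k] [Ring A] [Algebra k A]
    [FiniteDimensional k A] (n : ℕ) (G : Quiver.{0} (Fin n))
    (φ : @PathAlgebra k (Fin n) ‹Field k› G →ₐ[k] A)
    (hpres : @IsAdmissiblePresentation k (Fin n) A ‹Field k› G
      (inferInstanceAs (Fintype (Fin n))) (inferInstanceAs (DecidableEq (Fin n)))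
      ‹Ring A› ‹Algebra k A› φ)
    (a b : Fin n) (hab : a ≠ b)
    (p : @Quiver.Path (Fin n) G a b) (q : @Quiver.Path (Fin n) G b a) :
    ¬ IsTauTiltingFinite (TensorProduct k A A) := by
  letI : Quiver.{0} (Fin n) := G
  exact master_tau_infinite φ hpres.1 hpres.2.1 hab p q
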